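/- Let α ∈ T(X,Y,Z). Then α is a regular element of T(X,Y,Z) if and only if α(X) ∩ Y ⊆ α(Z), if and only if α(X) ∩ Y = α(Z). -/
import Mathlib

/-- α ∈ T(X,Y,Z) is regular iff α(X) ∩ Y ⊆ α(Z) iff α(X) ∩ Y = α(Z). -/
theorem stmt_4 {X : Type*} [Nonempty X] (Y Z : Set X) (hZY : Z ⊆ Y)
    (hZ : Z.Nonempty)
    (α : X → X) (hα : α '' Y ⊆ Z) :
    ((∃ β : X → X, β '' Y ⊆ Z ∧ α ∘ β ∘ α = α) ↔ Set.range α ∩ Y ⊆ α '' Z) ∧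
    ((Set.range α ∩ Y ⊆ α '' Z) ↔ Set.range α ∩ Y = α '' Z) := by
  classical
  constructor
  · constructor
    · rintro ⟨β, hβ, hcomp⟩ v ⟨⟨x, hx⟩, hvY⟩
      refine ⟨β v, hβ ⟨v, hvY, rfl⟩, ?_⟩
      subst hx
      exact congrFun hcomp x
    · intro h
      refine ⟨fun x => if hx : x ∈ Set.range α ∩ Y then (h hx).choose
        else if hr : x ∈ Set.range α then hr.choose else hZ.choose, ?_, ?_⟩
      · rintro z ⟨y, hy, rfl⟩
        beta_reduce
        split_ifs with hx hr
        · exact (h hx).choose_spec.1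
        · -- y ∈ Y, y ∈ range α, but y ∉ range α ∩ Y : contradiction
          exact absurd ⟨hr, hy⟩ hx
        · exact hZ.choose_spec
      · funext x
        simp only [Function.comp_apply]
        split_ifs with hx hr
        · exact (h hx).choose_spec.2
        · exact hr.choose_spec
        · exact absurd ⟨x, rfl⟩ hr
  · constructor
    · intro h
      refine Set.Subset.antisymm h ?_
      rintro v ⟨z, hz, rfl⟩
      exact ⟨⟨z, rfl⟩, hZY (hα ⟨z, hZY hz, rfl⟩)⟩
    · intro h
      exact h.le
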